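/- Suppose the width format w : Fin d → ℕ satisfies w j = 1 for some j ∈ Fin d (and w i ≥ 1 for all i). Then the tensor f_0 is not concise: there exists j' ∈ Fin d such that the flattening matrix M_{f_0}^{j'} does not have full row rank w j' · w (j'+1). -/

import Mathlib

open scoped BigOperators

attribute [local instance] Classical.propDecidable

namespace ABP

variable {d : ℕ} [NeZero d]

/-- The set of edges in layer `i` of a (cyclic / trace) ABP of width format `w`:
an edge `(a, b)` goes from vertex `a` of layer `i` to vertex `b` of layer `i + 1`
(layer indices modulo `d`). -/
abbrev Edge (w : Fin d → ℕ) (i : Fin d) : Type := Fin (w i) × Fin (w (i + 1))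

/-- An edge tuple is a valid path if consecutive edges match (cyclically). -/
def ValidPath (w : Fin d → ℕ) (p : ∀ i : Fin d, Edge w i) : Prop :=
  ∀ i : Fin d, (p i).2 = (p (i + 1)).1

/-- An edge is parity preserving if its two endpoints have the same parity. -/
def ParityPres {w : Fin d → ℕ} {i : Fin d} (e : Edge w i) : Prop :=
  e.1.val % 2 = e.2.val % 2

/-- The number of parity-preserving edges of an edge tuple. -/
noncomputable def ppCount (w : Fin d → ℕ) (p : ∀ i : Fin d, Edge w i) : ℕ :=
  (Finset.univ.filter fun i : Fin d => ParityPres (p i)).card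

/-- The tensor `f_com`: value 1 on valid paths, 0 elsewhere. -/
noncomputable def fcom (w : Fin d → ℕ) : (∀ i : Fin d, Edge w i) → ℂ :=
  fun p => if ValidPath w p then 1 else 0

/-- The tensor `f_0`: value 1 on valid paths containing exactly one
parity-preserving edge, 0 elsewhere. -/
noncomputable def f0 (w : Fin d → ℕ) : (∀ i : Fin d, Edge w i) → ℂ :=
  fun p => if ValidPath w p ∧ ppCount w p = 1 then 1 else 0

/-- The action of a tuple of matrices `g i : E^i → E^i → ℂ` on a tensor:
`((⊗ᵢ gᵢ) f)(p) = Σ_q (Πᵢ gᵢ (p i) (q i)) · f q`. -/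
noncomputable def actT (w : Fin d → ℕ) (g : ∀ i : Fin d, Edge w i → Edge w i → ℂ)
    (f : (∀ i : Fin d, Edge w i) → ℂ) : (∀ i : Fin d, Edge w i) → ℂ :=
  fun p => ∑ q : ∀ i : Fin d, Edge w i, (∏ i : Fin d, g i (p i) (q i)) * f q

end ABP

namespace ABP

/-- Insert an edge `e` of layer `j` into a tuple of edges of all other layers,
producing a full edge tuple. -/
def insertAt {d : ℕ} [NeZero d] (w : Fin d → ℕ) (j : Fin d) (e : Edge w j)
    (c : ∀ i : {i : Fin d // i ≠ j}, Edge w i.val) : ∀ i : Fin d, Edge w i :=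
  fun i => if h : i = j then cast (congrArg (Edge w) h.symm) e else c ⟨i, h⟩

/-- The `j`-th flattening matrix of a tensor: rows indexed by edges of layer `j`,
columns indexed by tuples of edges of the other layers. -/
def flatten {d : ℕ} [NeZero d] (w : Fin d → ℕ)
    (f : (∀ i : Fin d, Edge w i) → ℂ) (j : Fin d) :
    Matrix (Edge w j) (∀ i : {i : Fin d // i ≠ j}, Edge w i.val) ℂ :=
  Matrix.of fun e c => f (insertAt w j e c)

/-- A tensor is concise if every flattening matrix has full row rank. -/
def Concise {d : ℕ} [NeZero d] (w : Fin d → ℕ)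
    (f : (∀ i : Fin d, Edge w i) → ℂ) : Prop :=
  ∀ j : Fin d, (flatten w f j).rank = w j * w (j + 1)

end ABP


lemma rank_lt_card_of_row_zero {m n : Type*} [Fintype m] [Fintype n] [DecidableEq m]
    (M : Matrix m n ℂ) (e : m) (h : ∀ c, M e c = 0) :
    M.rank < Fintype.card m := by
  have hr : LinearMap.range M.mulVecLin ≤
      LinearMap.ker (LinearMap.proj e : ((m → ℂ) →ₗ[ℂ] ℂ)) := by
    rintro x ⟨v, rfl⟩
    simp [LinearMap.mem_ker, Matrix.mulVecLin_apply, Matrix.mulVec, dotProduct, h]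
  have hne : (LinearMap.proj e : ((m → ℂ) →ₗ[ℂ] ℂ)) ≠ 0 := by
    intro h0
    have : (Pi.single e 1 : m → ℂ) e = 0 := by
      have := congrFun (congrArg DFunLike.coe h0) (Pi.single e (1 : ℂ))
      simp only [LinearMap.proj_apply, LinearMap.zero_apply] at this
      rw [← this]
    simp at this
  have hlt : LinearMap.ker (LinearMap.proj e : ((m → ℂ) →ₗ[ℂ] ℂ)) < ⊤ := by
    rw [lt_top_iff_ne_top]
    intro htop
    exact hne (LinearMap.ker_eq_top.mp htop)
  calc M.rank = Module.finrank ℂ (LinearMap.range M.mulVecLin) := rfl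
    _ ≤ Module.finrank ℂ (LinearMap.ker (LinearMap.proj e : ((m → ℂ) →ₗ[ℂ] ℂ))) :=
        Submodule.finrank_mono hr
    _ < Module.finrank ℂ (m → ℂ) := Submodule.finrank_lt hlt.ne
    _ = Fintype.card m := by simp

lemma ABP.insertAt_self {d : ℕ} [NeZero d] (w : Fin d → ℕ) (j : Fin d) (e : ABP.Edge w j)
    (c : ∀ i : {i : Fin d // i ≠ j}, ABP.Edge w i.val) :
    ABP.insertAt w j e c j = e := by
  simp [ABP.insertAt]

/-- For odd `d ≥ 3` and width format `w` with all `w i ≥ 1`,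
if `w j = 1` for some `j` then `f_0` is not concise: some flattening fails to
have full row rank. -/
theorem f0_not_concise_of_width_one (d : ℕ) [NeZero d] (hd3 : 3 ≤ d) (hodd : Odd d)
    (w : Fin d → ℕ) (hw : ∀ i, 1 ≤ w i) (hj : ∃ j : Fin d, w j = 1) :
    ∃ j' : Fin d, (ABP.flatten w (ABP.f0 w) j').rank ≠ w j' * w (j' + 1) := by
  obtain ⟨j, hj1⟩ := hj
  refine ⟨j + 1, ?_⟩
  set j' : Fin d := j + 1 with hj'
  have hw1 : 1 ≤ w j' := hw _
  have hw2 : 1 ≤ w (j' + 1) := hw _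
  set e₀ : ABP.Edge w j' := (⟨0, hw1⟩, ⟨0, hw2⟩) with he₀
  have hrow : ∀ c, (ABP.flatten w (ABP.f0 w) j') e₀ c = 0 := by
    intro c
    show ABP.f0 w (ABP.insertAt w j' e₀ c) = 0
    set p := ABP.insertAt w j' e₀ c with hp
    rw [ABP.f0, if_neg]
    rintro ⟨hvalid, hcount⟩
    have hpj' : p j' = e₀ := ABP.insertAt_self w j' e₀ c
    have hne : j ≠ j' := by
      intro h
      have h1 : ((1 : Fin d) : ℕ) = 1 := by
        rw [Fin.val_one']
        exact Nat.mod_eq_of_lt (by omega)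
      have h2 : (j : ℕ) = ((j : ℕ) + 1) % d := by
        conv_lhs => rw [h]
        rw [hj', Fin.val_add, h1]
      have hlt := j.isLt
      rcases Nat.lt_or_ge ((j : ℕ) + 1) d with hc | hc
      · rw [Nat.mod_eq_of_lt hc] at h2
        omega
      · have hd : (j : ℕ) + 1 = d := by omega
        rw [hd, Nat.mod_self] at h2
        omega
    have hpp1 : ABP.ParityPres (p j') := by
      rw [hpj']
      simp [ABP.ParityPres, he₀]
    have hpp2 : ABP.ParityPres (p j) := by
      have h2 : (p j).2 = (p j').1 := hvalid j
      have hv1 : ((p j').1 : ℕ) = 0 := by rw [hpj']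
      have hv2 : ((p j).2 : ℕ) = 0 := by rw [h2, hv1]
      have hv0 : ((p j).1 : ℕ) = 0 := by
        have := (p j).1.isLt
        omega
      simp [ABP.ParityPres, hv0, hv2]
    have hsub : ({j, j'} : Finset (Fin d)) ⊆
        Finset.univ.filter fun i : Fin d => ABP.ParityPres (p i) := by
      intro i hi
      simp only [Finset.mem_insert, Finset.mem_singleton] at hi
      rcases hi with rfl | rfl
      · simp [hpp2]
      · simp [hpp1]
    have h2le : 2 ≤ ABP.ppCount w p := by
      have hcc := Finset.card_le_card hsub
      rw [Finset.card_insert_of_notMem (by simpa using hne), Finset.card_singleton] at hcc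
      exact hcc
    omega
  have hlt := rank_lt_card_of_row_zero (ABP.flatten w (ABP.f0 w) j') e₀ hrow
  have hcard : Fintype.card (ABP.Edge w j') = w j' * w (j' + 1) := by
    simp [ABP.Edge]
  rw [hcard] at hlt
  exact Nat.ne_of_lt hlt
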